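/- A family F_c is an FC-family if there exists a weight function w on ⋃F_c (w : α → ℕ, positive somewhere on ⋃F_c) such that every union-closed extension F' ∈ uce(F_c) has nonnegative share: ∑_{A∈F'}(2·∑_{a∈A}w(a) − ∑_{a∈⋃F_c}w(a)) ≥ 0. -/
import Mathlib


variable {α : Type*} [DecidableEq α]

/-- A family is union-closed. -/
def UC (F : Finset (Finset α)) : Prop := ∀ A ∈ F, ∀ B ∈ F, A ∪ B ∈ F

/-- Number of members of `F` containing `a`. -/
def cnt (a : α) (F : Finset (Finset α)) : ℕ := (F.filter (fun A => a ∈ A)).card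

/-- Union-ucClosure: all unions of nonempty subfamilies. -/
def ucClosure (F : Finset (Finset α)) : Finset (Finset α) :=
  (F.powerset.filter (fun G => G.Nonempty)).image (fun G => G.sup id)

/-- FC-family. -/
def IsFC (Fc : Finset (Finset α)) : Prop :=
  ∀ F : Finset (Finset α), UC F → Fc ⊆ F →
    ∃ a ∈ Fc.sup id, 2 * cnt a F ≥ F.card

/-- Union-closed extensions of Fc. -/
def UCE (Fc F' : Finset (Finset α)) : Prop :=
  F' ⊆ (Fc.sup id).powerset ∧ UC F' ∧ ∀ A ∈ F', ∀ B ∈ Fc, A ∪ B ∈ F'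

theorem isFC_of_weight (Fc : Finset (Finset α)) (w : α → ℕ)
    (hwp : ∃ a ∈ Fc.sup id, 0 < w a)
    (hshares : ∀ F' : Finset (Finset α), UCE Fc F' →
      0 ≤ ∑ A ∈ F', (2 * (∑ a ∈ A, (w a : ℤ)) - ∑ a ∈ Fc.sup id, (w a : ℤ))) :
    IsFC Fc := by 
  intro F hUC hsub
  by_contra hcon
  push_neg at hcon
  set U := Fc.sup id with hU
  have hBsubU : ∀ B ∈ Fc, B ⊆ U := fun B hB => Finset.le_sup (f := id) hB
  have key : (0:ℤ) ≤ ∑ A ∈ F, (2 * (∑ a ∈ A ∩ U, (w a : ℤ)) - ∑ a ∈ U, (w a : ℤ)) := by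
    rw [← Finset.sum_fiberwise_of_maps_to (g := fun A => A \ U)
      (t := F.image (fun A => A \ U)) (fun A hA => Finset.mem_image_of_mem _ hA)]
    apply Finset.sum_nonneg
    intro D _
    set s := F.filter (fun A => A \ U = D) with hs
    have hinj : ∀ A ∈ s, ∀ B ∈ s, A ∩ U = B ∩ U → A = B := by
      intro A hA B hB h
      simp only [hs, Finset.mem_filter] at hA hB
      have hd : A \ U = B \ U := hA.2.trans hB.2.symm
      ext x
      by_cases hx : x ∈ U
      · constructor <;> intro hxm
        · exact (Finset.mem_inter.mp (h ▸ Finset.mem_inter.mpr ⟨hxm, hx⟩)).1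
        · exact (Finset.mem_inter.mp (h ▸ Finset.mem_inter.mpr ⟨hxm, hx⟩)).1
      · constructor <;> intro hxm
        · exact (Finset.mem_sdiff.mp (hd ▸ Finset.mem_sdiff.mpr ⟨hxm, hx⟩)).1
        · exact (Finset.mem_sdiff.mp (hd ▸ Finset.mem_sdiff.mpr ⟨hxm, hx⟩)).1
    have him : ∑ A ∈ s, (2 * (∑ a ∈ A ∩ U, (w a : ℤ)) - ∑ a ∈ U, (w a : ℤ))
        = ∑ S ∈ s.image (fun A => A ∩ U),
            (2 * (∑ a ∈ S, (w a : ℤ)) - ∑ a ∈ U, (w a : ℤ)) :=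
      (Finset.sum_image (f := fun S => 2 * (∑ a ∈ S, (w a : ℤ)) - ∑ a ∈ U, (w a : ℤ)) hinj).symm
    rw [him]
    apply hshares
    refine ⟨?_, ?_, ?_⟩
    · intro S hS
      obtain ⟨A, _, rfl⟩ := Finset.mem_image.mp hS
      exact Finset.mem_powerset.mpr Finset.inter_subset_right
    · intro S hS T hT
      obtain ⟨A, hA, rfl⟩ := Finset.mem_image.mp hS
      obtain ⟨B, hB, rfl⟩ := Finset.mem_image.mp hT
      simp only [hs, Finset.mem_filter] at hA hB
      refine Finset.mem_image.mpr ⟨A ∪ B, ?_, ?_⟩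
      · simp only [hs, Finset.mem_filter]
        exact ⟨hUC A hA.1 B hB.1, by
          rw [Finset.union_sdiff_distrib, hA.2, hB.2, Finset.union_self]⟩
      · rw [Finset.union_inter_distrib_right]
    · intro S hS B hB
      obtain ⟨A, hA, rfl⟩ := Finset.mem_image.mp hS
      simp only [hs, Finset.mem_filter] at hA
      refine Finset.mem_image.mpr ⟨A ∪ B, ?_, ?_⟩
      · simp only [hs, Finset.mem_filter]
        refine ⟨hUC A hA.1 B (hsub hB), ?_⟩
        rw [Finset.union_sdiff_distrib, hA.2, Finset.sdiff_eq_empty_iff_subset.mpr (hBsubU B hB),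
          Finset.union_empty]
      · rw [Finset.union_inter_distrib_right, Finset.inter_eq_left.mpr (hBsubU B hB)]
  have swap : ∑ A ∈ F, (∑ a ∈ A ∩ U, (w a : ℤ)) = ∑ a ∈ U, (w a : ℤ) * cnt a F := by
    have h1 : ∀ A : Finset α, ∑ a ∈ A ∩ U, (w a : ℤ)
        = ∑ a ∈ U, if a ∈ A then (w a : ℤ) else 0 := by
      intro A
      rw [Finset.inter_comm, ← Finset.sum_filter]
      rfl
    simp_rw [h1]
    rw [Finset.sum_comm]
    refine Finset.sum_congr rfl fun a _ => ?_
    rw [← Finset.sum_filter, Finset.sum_const, cnt, nsmul_eq_mul, mul_comm]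
  have expand : ∑ A ∈ F, (2 * (∑ a ∈ A ∩ U, (w a : ℤ)) - ∑ a ∈ U, (w a : ℤ))
      = ∑ a ∈ U, (w a : ℤ) * (2 * cnt a F - F.card) := by
    have h2 : ∑ a ∈ U, (w a : ℤ) * (2 * cnt a F - F.card)
        = 2 * (∑ a ∈ U, (w a : ℤ) * cnt a F) - F.card * ∑ a ∈ U, (w a : ℤ) := by
      rw [Finset.mul_sum, Finset.mul_sum, ← Finset.sum_sub_distrib]
      exact Finset.sum_congr rfl fun a _ => by ring
    rw [h2, ← swap, Finset.sum_sub_distrib, ← Finset.mul_sum, Finset.sum_const, nsmul_eq_mul]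
  have neg : ∑ a ∈ U, (w a : ℤ) * (2 * cnt a F - F.card) < 0 := by
    obtain ⟨a0, ha0, hw0⟩ := hwp
    have : ∑ a ∈ U, (w a : ℤ) * (2 * cnt a F - F.card) < ∑ a ∈ U, (0:ℤ) := by
      apply Finset.sum_lt_sum
      · intro a ha
        have h := hcon a ha
        have h2 : (2 * (cnt a F : ℤ) - F.card) ≤ 0 := by omega
        exact mul_nonpos_of_nonneg_of_nonpos (Int.natCast_nonneg _) h2
      · refine ⟨a0, ha0, ?_⟩
        have h := hcon a0 ha0
        have h2 : (2 * (cnt a0 F : ℤ) - F.card) < 0 := by omega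
        exact mul_neg_of_pos_of_neg (by exact_mod_cast hw0) h2
    simpa using this
  rw [expand] at key
  linarith
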